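/- Let F be a field, R an Artinian local F-algebra with residue field l of finite degree over F, and l₀ the separable closure of F in l. Then there exists a unique F-algebra homomorphism s : l₀ → R lifting the inclusion l₀ → l along the residue map R → l (Hensel lifting of the separable subextension). -/
import Mathlib


/-- **Hensel lifting of the separable residue subextension.**
Let `F` be a field, `R` an Artinian local `F`-algebra whose residue field `l` is of finite
degree over `F`, and `l₀` the separable closure of `F` in `l`.  Then there is a unique
`F`-algebra homomorphism `s : l₀ → R` lifting the inclusion `l₀ → l` along the residue
map `R → l`. -/
theorem hensel_lift_separable_closure (F R : Type) [Field F] [CommRing R]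
    [Algebra F R] [IsArtinianRing R] [IsLocalRing R]
    [Module.Finite F (IsLocalRing.ResidueField R)] :
    ∃! s : (separableClosure F (IsLocalRing.ResidueField R)) →ₐ[F] R,
      ∀ x : separableClosure F (IsLocalRing.ResidueField R),
        IsLocalRing.residue R (s x) = (x : IsLocalRing.ResidueField R) := by
  set l := IsLocalRing.ResidueField R with hl
  set l₀ := separableClosure F l with hl₀
  haveI : Algebra.FormallyEtale F l₀ := Algebra.FormallyEtale.of_isSeparable F l₀
  have hnil : IsNilpotent (IsLocalRing.maximalIdeal R) := by
    rw [← IsLocalRing.jacobson_eq_maximalIdeal (⊥ : Ideal R) bot_ne_top]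
    exact IsArtinianRing.isNilpotent_jacobson_bot
  let g : l₀ →ₐ[F] R ⧸ IsLocalRing.maximalIdeal R :=
    { toRingHom := (l₀.val : l₀ →+* l)
      commutes' := fun a => by exact l₀.val.commutes a }
  have key : ∀ (s : l₀ →ₐ[F] R),
      (∀ x : l₀, IsLocalRing.residue R (s x) = (x : l)) ↔
      (Ideal.Quotient.mkₐ F (IsLocalRing.maximalIdeal R)).comp s = g := by
    intro s
    constructor
    · intro h; ext x; exact h x
    · intro h x; exact DFunLike.congr_fun h x
  obtain ⟨s, hs⟩ := Algebra.FormallySmooth.exists_lift (R := F) (A := l₀) (B := R)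
    (IsLocalRing.maximalIdeal R) hnil g
  refine ⟨s, (key s).mpr hs, fun t ht => ?_⟩
  exact Algebra.FormallyUnramified.lift_unique (IsLocalRing.maximalIdeal R) hnil t s
    (((key t).mp ht).trans hs.symm)
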